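/- Let A be a finite multiset of natural numbers and N a natural number. If ∑_{n ∈ A} 2^n ≥ 2^N and every element n of A satisfies n ≤ N, then there exists a sub-multiset A' of A with ∑_{n ∈ A'} 2^n = 2^N. -/

import Mathlib

theorem stmt_0 (A : Multiset ℕ) (N : ℕ)
    (hsum : 2 ^ N ≤ (A.map (fun n => 2 ^ n)).sum)
    (hle : ∀ n ∈ A, n ≤ N) :
    ∃ A' : Multiset ℕ, A' ≤ A ∧ (A'.map (fun n => 2 ^ n)).sum = 2 ^ N := by
  induction N generalizing A with
  | zero =>
    have hA : A ≠ 0 := by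
      rintro rfl
      simp at hsum
    obtain ⟨a, ha⟩ := Multiset.exists_mem_of_ne_zero hA
    have ha0 : a = 0 := Nat.le_zero.mp (hle a ha)
    subst ha0
    exact ⟨{0}, Multiset.singleton_le.mpr ha, by simp⟩
  | succ N ih =>
    by_cases h : (N + 1) ∈ A
    · exact ⟨{N + 1}, Multiset.singleton_le.mpr h, by simp⟩
    · have hle' : ∀ n ∈ A, n ≤ N := fun n hn =>
        Nat.lt_succ_iff.mp (lt_of_le_of_ne (hle n hn) (fun e => h (by rwa [e] at hn)))
      have h2 : 2 ^ N ≤ (A.map (fun n => 2 ^ n)).sum := by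
        calc 2 ^ N ≤ 2 ^ (N + 1) := Nat.pow_le_pow_right (by norm_num) (Nat.le_succ _)
        _ ≤ _ := hsum
      obtain ⟨A₁, hA₁le, hA₁sum⟩ := ih A h2 hle'
      have hsplit : (A - A₁) + A₁ = A := tsub_add_cancel_of_le hA₁le
      have hsumeq : ((A - A₁).map (fun n => 2 ^ n)).sum + 2 ^ N
          = (A.map (fun n => 2 ^ n)).sum := by
        rw [← hA₁sum, ← Multiset.sum_add, ← Multiset.map_add, hsplit]
      have hB : 2 ^ N ≤ ((A - A₁).map (fun n => 2 ^ n)).sum := by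
        have : 2 ^ (N + 1) = 2 ^ N + 2 ^ N := by ring
        omega
      have hleB : ∀ n ∈ A - A₁, n ≤ N := fun n hn =>
        hle' n (Multiset.mem_of_le (Multiset.sub_le_self _ _) hn)
      obtain ⟨A₂, hA₂le, hA₂sum⟩ := ih (A - A₁) hB hleB
      refine ⟨A₁ + A₂, ?_, ?_⟩
      · calc A₁ + A₂ ≤ A₁ + (A - A₁) := add_le_add le_rfl hA₂le
          _ = A := by rw [add_comm, hsplit]
      · rw [Multiset.map_add, Multiset.sum_add, hA₁sum, hA₂sum]
        ring
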